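/- For every topological group G, if G satisfies property α_{1.5} at the identity, then G satisfies property α_1 at the identity. That is, for all pairwise disjoint sequences S_1, S_2, ... each converging to e, there is a set S contained in the union of the S_n, converging to e, with S_n \ S finite for every n. -/

import Mathlib

open Filter Topology Set

/-- A countably infinite set converging to `x`: `x` is not in the set, and the set is
cofinitely contained in every neighborhood of `x`. -/
def ConvSeq {X : Type*} [TopologicalSpace X] (S : Set X) (x : X) : Prop :=
  S.Countable ∧ S.Infinite ∧ x ∉ S ∧ ∀ U ∈ nhds x, (S \ U).Finite

/-- A set converges to `x` in the weak sense: all but finitely many of its elements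
are in every neighborhood of `x`. -/
def SetConv {X : Type*} [TopologicalSpace X] (S : Set X) (x : X) : Prop :=
  ∀ U ∈ nhds x, (S \ U).Finite
noncomputable def sigmaFun {G : Type*} [Group G] (t a : ℕ → G) (p : ℕ) : ℕ :=
  sInf { i | (∀ q, q < p → sigmaFun t a q < i) ∧ t i * a p ≠ 1 ∧
      ∀ q, q < p → t i * a p ≠ t (sigmaFun t a q) * a q }
termination_by p
decreasing_by all_goals assumption

lemma sigmaFun_mem {G : Type*} [Group G] {t : ℕ → G} (a : ℕ → G)
    (ht : Function.Injective t) (p : ℕ) :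
    (∀ q, q < p → sigmaFun t a q < sigmaFun t a p) ∧ t (sigmaFun t a p) * a p ≠ 1 ∧
      ∀ q, q < p → t (sigmaFun t a p) * a p ≠ t (sigmaFun t a q) * a q := by
  have hfin1 : ∀ c : G, {i : ℕ | t i * a p = c}.Finite := by
    intro c
    have : {i : ℕ | t i * a p = c} ⊆ t ⁻¹' {c * (a p)⁻¹} := by
      intro i hi
      simp only [Set.mem_preimage, Set.mem_singleton_iff]
      rw [← hi]; group
    exact ((Set.finite_singleton _).preimage ht.injOn).subset this
  have hbad : ({i : ℕ | (∀ q, q < p → sigmaFun t a q < i) ∧ t i * a p ≠ 1 ∧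
      ∀ q, q < p → t i * a p ≠ t (sigmaFun t a q) * a q}ᶜ).Finite := by
    have hsub : {i : ℕ | (∀ q, q < p → sigmaFun t a q < i) ∧ t i * a p ≠ 1 ∧
        ∀ q, q < p → t i * a p ≠ t (sigmaFun t a q) * a q}ᶜ ⊆
        (⋃ q ∈ Finset.range p, Set.Iic (sigmaFun t a q)) ∪ {i | t i * a p = 1} ∪
          ⋃ q ∈ Finset.range p, {i | t i * a p = t (sigmaFun t a q) * a q} := by
      intro i hi
      simp only [Set.mem_compl_iff, Set.mem_setOf_eq, not_and_or, not_forall, not_not] at hi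
      rcases hi with h | h | h
      · obtain ⟨q, hq, hle⟩ := h
        exact Or.inl (Or.inl (Set.mem_biUnion (Finset.mem_range.2 hq) (by simpa using hle)))
      · exact Or.inl (Or.inr h)
      · obtain ⟨q, hq, he⟩ := h
        exact Or.inr (Set.mem_biUnion (Finset.mem_range.2 hq) he)
    refine Set.Finite.subset ?_ hsub
    refine Set.Finite.union (Set.Finite.union ?_ (hfin1 1)) ?_
    · exact Set.Finite.biUnion (Finset.range p).finite_toSet fun q _ => Set.finite_Iic _
    · exact Set.Finite.biUnion (Finset.range p).finite_toSet fun q _ => hfin1 _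
  have hne := hbad.infinite_compl.nonempty
  rw [compl_compl] at hne
  have := Nat.sInf_mem hne
  rw [sigmaFun]
  exact this

/-- For every topological group `G`, α₁.₅ at the identity implies α₁ at the identity. -/
theorem alpha_one_point_five_implies_alpha_one
    {G : Type*} [Group G] [TopologicalSpace G] [IsTopologicalGroup G]
    (h15 : ∀ S : ℕ → Set G, Pairwise (Function.onFun Disjoint S) →
      (∀ n, ConvSeq (S n) 1) →
      ∃ T, T ⊆ ⋃ n, S n ∧ ConvSeq T 1 ∧ {n | (S n \ T).Finite}.Infinite) :
    ∀ S : ℕ → Set G, Pairwise (Function.onFun Disjoint S) →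
      (∀ n, ConvSeq (S n) 1) →
      ∃ T, T ⊆ ⋃ n, S n ∧ ConvSeq T 1 ∧ ∀ n, (S n \ T).Finite := by
  intro S hdisj hconv
  classical
  obtain ⟨hS0c, hS0i, hS0ne, hS0conv⟩ := hconv 0
  -- carrier sequence from S 0
  set t : ℕ → G := fun i => ((Set.Infinite.natEmbedding (S 0) hS0i) i : G) with ht_def
  have htinj : Function.Injective t :=
    Subtype.coe_injective.comp (Set.Infinite.natEmbedding (S 0) hS0i).injective
  have htmem : ∀ i, t i ∈ S 0 := fun i => ((Set.Infinite.natEmbedding (S 0) hS0i) i).2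
  have htconv : ∀ U ∈ nhds (1:G), {i | t i ∉ U}.Finite := by
    intro U hU
    have h1 : (S 0 \ U).Finite := hS0conv U hU
    exact (h1.preimage htinj.injOn).subset (fun i hi => ⟨htmem i, hi⟩)
  -- bijective enumerations of S (n+1)
  have henum : ∀ n : ℕ, ∃ f : ℕ → G, Function.Injective f ∧ Set.range f = S (n+1) := by
    intro n
    obtain ⟨hc, hi, -, -⟩ := hconv (n+1)
    haveI := hc.to_subtype
    haveI := hi.to_subtype
    obtain ⟨d⟩ := nonempty_denumerable ↥(S (n+1))
    refine ⟨fun j => ((Denumerable.eqv ↥(S (n+1))).symm j : G),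
      Subtype.coe_injective.comp (Equiv.injective _), ?_⟩
    ext x
    constructor
    · rintro ⟨j, rfl⟩; exact Subtype.coe_prop _
    · intro hx; exact ⟨(Denumerable.eqv ↥(S (n+1))) ⟨x, hx⟩, by simp⟩
  choose ℓ hℓinj hℓran using henum
  have hℓmem : ∀ n j, ℓ n j ∈ S (n+1) := fun n j => (hℓran n) ▸ Set.mem_range_self j
  have hℓconv : ∀ n, ∀ U ∈ nhds (1:G), {j | ℓ n j ∉ U}.Finite := by
    intro n U hU
    have h1 : (S (n+1) \ U).Finite := (hconv (n+1)).2.2.2 U hU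
    exact (h1.preimage (hℓinj n).injOn).subset (fun j hj => ⟨hℓmem n j, hj⟩)
  -- the triple encoding
  set E : ℕ ≃ ℕ × ℕ × ℕ := (Denumerable.eqv (ℕ × ℕ × ℕ)).symm with hE_def
  set a : ℕ → G := fun p => ℓ (E p).2.1 (E p).2.2 with ha_def
  set σ : ℕ → ℕ := sigmaFun t a with hσ_def
  set qf : ℕ → G := fun p => t (σ p) * a p with hqf_def
  have hσmono : StrictMono σ := fun q p h => (sigmaFun_mem a htinj p).1 q h
  have hq1 : ∀ p, qf p ≠ 1 := fun p => (sigmaFun_mem a htinj p).2.1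
  have hqinj : Function.Injective qf := by
    intro p p' h
    rcases lt_trichotomy p p' with hlt | he | hlt
    · exact absurd h.symm ((sigmaFun_mem a htinj p').2.2 p hlt)
    · exact he
    · exact absurd h ((sigmaFun_mem a htinj p).2.2 p' hlt)
  set P : ℕ → Set ℕ := fun m => {p | (E p).1 = m ∧ (E p).2.1 ≤ m} with hP_def
  set C : ℕ → Set G := fun m => qf '' P m with hC_def
  have hPmem : ∀ m j, E.symm (m, 0, j) ∈ P m := by
    intro m j
    constructor <;> simp
  have hPinf : ∀ m, (P m).Infinite := by
    intro m
    have hinj : Function.Injective (fun j : ℕ => E.symm (m, 0, j)) := by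
      intro j j' h
      have h2 := E.symm.injective h
      simp only [Prod.mk.injEq] at h2
      exact h2.2.2
    exact Set.infinite_of_injective_forall_mem hinj (hPmem m)
  have hCconv : ∀ m, ConvSeq (C m) 1 := by
    intro m
    refine ⟨(Set.to_countable (P m)).image _, (hPinf m).image hqinj.injOn, ?_, ?_⟩
    · rintro ⟨p, -, hp⟩
      exact hq1 p hp
    · intro U hU
      obtain ⟨V, hVo, hV1, hVU⟩ := exists_open_nhds_one_mul_subset hU
      have hVnh : V ∈ nhds (1:G) := hVo.mem_nhds hV1
      have hb1 : {p : ℕ | t (σ p) ∉ V}.Finite :=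
        ((htconv V hVnh).preimage hσmono.injective.injOn).subset (fun p hp => hp)
      have hb2 : {p : ℕ | p ∈ P m ∧ a p ∉ V}.Finite := by
        have hfin : ((Set.Iic m) ×ˢ Set.univ ∩ {ij : ℕ × ℕ | ℓ ij.1 ij.2 ∉ V}).Finite := by
          have : (Set.Iic m ×ˢ Set.univ ∩ {ij : ℕ × ℕ | ℓ ij.1 ij.2 ∉ V}) ⊆
              ⋃ i ∈ Set.Iic m, {i} ×ˢ {j | ℓ i j ∉ V} := by
            rintro ⟨i, j⟩ ⟨⟨hi, -⟩, hij⟩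
            exact Set.mem_biUnion hi ⟨rfl, hij⟩
          exact (Set.Finite.biUnion (Set.finite_Iic m)
            (fun i _ => (Set.finite_singleton i).prod (hℓconv i V hVnh))).subset this
        have hsub : {p : ℕ | p ∈ P m ∧ a p ∉ V} ⊆
            E ⁻¹' ({m} ×ˢ (Set.Iic m ×ˢ Set.univ ∩ {ij : ℕ × ℕ | ℓ ij.1 ij.2 ∉ V})) := by
          rintro p ⟨⟨hm, hle⟩, hap⟩
          exact ⟨hm, ⟨⟨hle, trivial⟩, hap⟩⟩
        exact (((Set.finite_singleton m).prod hfin).preimage E.injective.injOn).subset hsub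
      have hsub : C m \ U ⊆ qf '' ({p : ℕ | t (σ p) ∉ V} ∪ {p : ℕ | p ∈ P m ∧ a p ∉ V}) := by
        rintro x ⟨⟨p, hpP, rfl⟩, hxU⟩
        by_cases h1 : t (σ p) ∈ V
        · by_cases h2 : a p ∈ V
          · exact absurd (hVU (Set.mul_mem_mul h1 h2)) hxU
          · exact ⟨p, Or.inr ⟨hpP, h2⟩, rfl⟩
        · exact ⟨p, Or.inl h1, rfl⟩
      exact ((hb1.union hb2).image _).subset hsub
  have hCdisj : Pairwise (Function.onFun Disjoint C) := by
    intro m m' hmm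
    simp only [Function.onFun]
    rw [Set.disjoint_left]
    rintro x ⟨p, hp, rfl⟩ ⟨p', hp', he⟩
    exact hmm (hp.1.symm.trans ((congrArg (fun r => (E r).1) (hqinj he)).symm.trans hp'.1))
  obtain ⟨T₂, hT₂sub, hT₂conv, hT₂I⟩ := h15 C hCdisj hCconv
  set R : Set G := a '' {p | qf p ∈ T₂} with hR_def
  refine ⟨S 0 ∪ R, ?_, ?_, ?_⟩
  · rintro x (hx | ⟨p, hp, rfl⟩)
    · exact Set.mem_iUnion.2 ⟨0, hx⟩
    · exact Set.mem_iUnion.2 ⟨(E p).2.1 + 1, hℓmem _ _⟩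
  · obtain ⟨T2c, T2i, T2ne, T2conv⟩ := hT₂conv
    refine ⟨hS0c.union ((Set.to_countable _).image _),
      hS0i.mono Set.subset_union_left, ?_, ?_⟩
    · rintro (h | ⟨p, hp, he⟩)
      · exact hS0ne h
      · exact (hconv ((E p).2.1 + 1)).2.2.1 (he ▸ hℓmem _ _)
    · intro U hU
      obtain ⟨V, hVo, hV1, hVU⟩ := exists_open_nhds_one_mul_subset hU
      set W : Set G := V ∩ (fun g : G => g⁻¹) ⁻¹' V with hW_def
      have hWnh : W ∈ nhds (1:G) := by
        refine Filter.inter_mem (hVo.mem_nhds hV1) ?_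
        exact (hVo.preimage continuous_inv).mem_nhds (by simp [hV1])
      have hb1 : {p : ℕ | t (σ p) ∉ W}.Finite :=
        ((htconv W hWnh).preimage hσmono.injective.injOn).subset (fun p hp => hp)
      have hb2 : {p : ℕ | qf p ∈ T₂ ∧ qf p ∉ W}.Finite :=
        ((T2conv W hWnh).preimage hqinj.injOn).subset (fun p hp => ⟨hp.1, hp.2⟩)
      have hsub : (S 0 ∪ R) \ U ⊆ (S 0 \ U) ∪
          a '' ({p : ℕ | t (σ p) ∉ W} ∪ {p : ℕ | qf p ∈ T₂ ∧ qf p ∉ W}) := by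
        rintro x ⟨hx | ⟨p, hp, rfl⟩, hxU⟩
        · exact Or.inl ⟨hx, hxU⟩
        · by_cases h1 : t (σ p) ∈ W
          · by_cases h2 : qf p ∈ W
            · exfalso
              apply hxU
              have hx2 : a p = (t (σ p))⁻¹ * qf p := by
                simp only [hqf_def]
                group
              rw [hx2]
              exact hVU (Set.mul_mem_mul h1.2 h2.1)
            · exact Or.inr ⟨p, Or.inr ⟨hp, h2⟩, rfl⟩
          · exact Or.inr ⟨p, Or.inl h1, rfl⟩
      exact ((hS0conv U hU).union ((hb1.union hb2).image _)).subset hsub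
  · intro n
    match n with
    | 0 =>
      refine Set.Finite.subset (Set.finite_empty) ?_
      rintro x ⟨hx, hn⟩
      exact absurd (Or.inl hx) hn
    | (i+1) =>
      obtain ⟨m, hmI, hmi⟩ := hT₂I.exists_gt i
      have hCm : (C m \ T₂).Finite := hmI
      have hJinj : Function.Injective (fun j : ℕ => qf (E.symm (m, i, j))) := by
        intro j j' h
        have h2 := E.symm.injective (hqinj h)
        simp only [Prod.mk.injEq] at h2
        exact h2.2.2
      have hJ : {j : ℕ | qf (E.symm (m, i, j)) ∉ T₂}.Finite := by
        have hsub2 : {j : ℕ | qf (E.symm (m, i, j)) ∉ T₂} ⊆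
            (fun j : ℕ => qf (E.symm (m, i, j))) ⁻¹' (C m \ T₂) := by
          intro j hj
          refine ⟨⟨E.symm (m, i, j), ⟨?_, ?_⟩, rfl⟩, hj⟩ <;>
            simp [le_of_lt hmi]
        exact (hCm.preimage hJinj.injOn).subset hsub2
      have hsub3 : S (i+1) \ (S 0 ∪ R) ⊆ ℓ i '' {j : ℕ | qf (E.symm (m, i, j)) ∉ T₂} := by
        rintro x ⟨hx, hxR⟩
        have hx2 : x ∈ Set.range (ℓ i) := (hℓran i).symm ▸ hx
        obtain ⟨j, rfl⟩ := hx2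
        refine ⟨j, ?_, rfl⟩
        intro hT
        apply hxR
        refine Or.inr ⟨E.symm (m, i, j), hT, ?_⟩
        simp [ha_def]
      exact (hJ.image _).subset hsub3
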